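/- Let G be a simple graph that is acyclic, let v be a vertex of G, and let w be a closed walk in G from v to v. Then for every dart d of G (an edge together with a chosen direction), the number of occurrences of d in the list of darts of w equals the number of occurrences of the reversed dart of d in the list of darts of w. -/

import Mathlib

open Classical in
private lemma aux_count_walk {V : Type*} [DecidableEq V]
    (G : SimpleGraph V) (hG : G.IsAcyclic) (d : G.Dart) :
    ∀ {u x : V} (p : G.Walk u x),
      p.darts.count d +
        (if (G \ SimpleGraph.fromEdgeSet {d.edge}).Reachable d.snd u then 1 else 0) =
      p.darts.count d.symm +
        (if (G \ SimpleGraph.fromEdgeSet {d.edge}).Reachable d.snd x then 1 else 0) := by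
  intro u x p
  induction p with
  | nil => rfl
  | @cons a b c hab q ih =>
    set H := G \ SimpleGraph.fromEdgeSet {d.edge} with hH
    have hbridge : ¬ H.Reachable d.fst d.snd := by
      have := (SimpleGraph.isAcyclic_iff_forall_adj_isBridge.mp hG) d.adj
      rw [SimpleGraph.isBridge_iff] at this
      simpa [hH, SimpleGraph.Dart.edge, SimpleGraph.deleteEdges] using this
    have hne : d ≠ d.symm := by
      intro h
      exact G.ne_of_adj d.adj (congrArg (fun e : G.Dart => e.toProd.1) h)
    set d' : G.Dart := ⟨(a, b), hab⟩ with hd'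
    rw [SimpleGraph.Walk.darts_cons, List.count_cons, List.count_cons]
    simp only [beq_iff_eq]
    rw [← hd']
    by_cases h1 : d' = d
    · have ha : a = d.fst := congrArg (fun e : G.Dart => e.toProd.1) h1
      have hb : b = d.snd := congrArg (fun e : G.Dart => e.toProd.2) h1
      subst ha hb
      have hna : ¬ H.Reachable d.snd d.fst := fun h => hbridge h.symm
      have h2 : d' ≠ d.symm := h1 ▸ hne
      simp only [if_pos h1, if_neg h2, if_neg hna,
        if_pos (SimpleGraph.Reachable.refl d.snd), if_true] at ih ⊢
      omega
    · by_cases h2 : d' = d.symm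
      · have ha : a = d.snd := congrArg (fun e : G.Dart => e.toProd.1) h2
        have hb : b = d.fst := congrArg (fun e : G.Dart => e.toProd.2) h2
        subst ha hb
        have hna : ¬ H.Reachable d.snd d.fst := fun h => hbridge h.symm
        simp only [if_pos h2, if_neg h1, if_neg hna,
          if_pos (SimpleGraph.Reachable.refl d.snd), if_true] at ih ⊢
        omega
      · -- edge of d' is not d.edge, so a and b reachable in H
        have hedge : d'.edge ≠ d.edge := by
          intro he
          rcases (SimpleGraph.dart_edge_eq_iff d' d).mp he with h | h
          · exact h1 h
          · exact h2 h
        have hadj : H.Adj a b := by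
          refine ⟨hab, ?_⟩
          rw [SimpleGraph.fromEdgeSet_adj]
          rintro ⟨he, -⟩
          exact hedge he
        have hiff : H.Reachable d.snd a ↔ H.Reachable d.snd b :=
          ⟨fun h => h.trans hadj.reachable, fun h => h.trans hadj.symm.reachable⟩
        have hre : (if H.Reachable d.snd a then (1:ℕ) else 0) =
            (if H.Reachable d.snd b then 1 else 0) := by
          by_cases hr : H.Reachable d.snd a
          · rw [if_pos hr, if_pos (hiff.mp hr)]
          · rw [if_neg hr, if_neg (fun h => hr (hiff.mpr h))]
        simp only [if_neg h1, if_neg h2]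
        omega

theorem closed_walk_darts_count_symm_of_acyclic {V : Type*} [DecidableEq V]
    (G : SimpleGraph V) (hG : G.IsAcyclic) (v : V) (w : G.Walk v v)
    (d : G.Dart) :
    w.darts.count d = w.darts.count d.symm := by
  have := aux_count_walk G hG d w
  omega
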